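/- With f_n defined by f_0(z)=z, f_1(z)=f(z) nonconstant polynomial, f_{n+2}=f_{n+1}f_n+c, there exists R > 0 such that for every n ≥ 1, the preimage f_{n+1}⁻¹(D(0,R)) is contained in f_n⁻¹(D(0,R)), where D(0,R) is the open disk of radius R, and K_c equals the intersection of the sets f_n⁻¹(D(0,R)) for n ≥ 1. -/

import Mathlib

open Filter Metric

private lemma aux_low (a b d : ℂ) :
    ‖a‖ * ‖b‖ - ‖d‖ ≤ ‖a * b + d‖ := by
  have h : ‖a * b‖ ≤ ‖a * b + d‖ + ‖d‖ := by
    have := norm_sub_le (a * b + d) d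
    rw [add_sub_cancel_right] at this
    simpa using this
  rw [norm_mul] at h
  linarith

private lemma aux_up (a b d : ℂ) :
    ‖a * b + d‖ ≤ ‖a‖ * ‖b‖ + ‖d‖ := by
  have h := norm_add_le (a * b) d
  rwa [norm_mul] at h

theorem stmt3 (f : Polynomial ℂ) (hf : 0 < f.degree) (c : ℂ)
    (fs : ℕ → ℂ → ℂ)
    (h0 : ∀ z, fs 0 z = z) (h1 : ∀ z, fs 1 z = f.eval z)
    (hrec : ∀ n z, fs (n + 2) z = fs (n + 1) z * fs n z + c) :
    ∃ R : ℝ, R > 0 ∧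
      (∀ n : ℕ, 1 ≤ n →
        (fs (n + 1)) ⁻¹' Metric.ball (0 : ℂ) R ⊆ (fs n) ⁻¹' Metric.ball (0 : ℂ) R) ∧
      ({z : ℂ | BddAbove (Set.range fun n => ‖fs n z‖)} =
        ⋂ n : ℕ, (fs (n + 1)) ⁻¹' Metric.ball (0 : ℂ) R) := by
  -- bound M on |f| over |z| ≤ 3
  obtain ⟨M, hM0, hM⟩ : ∃ M : ℝ, 0 ≤ M ∧
      ∀ z : ℂ, ‖z‖ ≤ 3 → ‖f.eval z‖ ≤ M := by
    obtain ⟨x0, -, hx0⟩ := (isCompact_closedBall (0:ℂ) 3).exists_isMaxOn ⟨0, by simp⟩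
      ((continuous_norm.comp f.continuous).continuousOn :
        ContinuousOn (fun z : ℂ => ‖f.eval z‖) (closedBall 0 3))
    refine ⟨‖f.eval x0‖, norm_nonneg _, fun z hz => ?_⟩
    exact hx0 (by rwa [mem_closedBall_zero_iff])
  -- properness: N with |f z| ≤ 3 → |z| ≤ N
  obtain ⟨N, hN0, hN⟩ : ∃ N : ℝ, 0 ≤ N ∧
      ∀ z : ℂ, ‖f.eval z‖ ≤ 3 → ‖z‖ ≤ N := by
    have hten : Tendsto (fun z : ℂ => ‖f.eval z‖) (comap norm atTop) atTop :=
      f.tendsto_norm_atTop hf tendsto_comap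
    have h4 : ∀ᶠ z : ℂ in comap norm atTop, (4:ℝ) ≤ ‖f.eval z‖ :=
      hten.eventually (eventually_ge_atTop 4)
    rw [Filter.eventually_comap] at h4
    rw [Filter.eventually_atTop] at h4
    obtain ⟨N0, hN0'⟩ := h4
    refine ⟨max N0 0, le_max_right _ _, fun z hz => ?_⟩
    by_contra hc
    push_neg at hc
    have h1' : N0 ≤ ‖z‖ := by
      exact le_trans (le_max_left _ _) hc.le
    have := hN0' ‖z‖ h1' z rfl
    linarith
  obtain ⟨C, hCdef⟩ : ∃ C : ℝ, C = ‖c‖ := ⟨_, rfl⟩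
  have hC : 0 ≤ C := hCdef ▸ norm_nonneg c
  obtain ⟨ρ, hρdef⟩ : ∃ ρ : ℝ, ρ = M + 3*N + 9*C + 100 := ⟨_, rfl⟩
  obtain ⟨R, hRdef⟩ : ∃ R : ℝ, R = 3*ρ + C + 1 := ⟨_, rfl⟩
  have hρM : M < ρ := by rw [hρdef]; linarith
  have hρbig : 100 ≤ ρ := by rw [hρdef]; linarith
  have hρC : 2*C + 1 ≤ ρ := by rw [hρdef]; linarith
  have hρN : 3*N + C + 1 ≤ ρ := by rw [hρdef]; linarith
  have hRρ : ρ < R := by rw [hRdef]; linarith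
  have hRpos : 0 < R := by rw [hRdef]; linarith
  have hRC : C + 1 ≤ R := by rw [hRdef]; linarith
  have hR3ρ : R = 3*ρ + C + 1 := hRdef
  -- V: small value at n forces value < ρ at n+1
  have hV : ∀ n, ∀ z : ℂ, ‖fs n z‖ ≤ 1/2 → ‖fs (n+1) z‖ < ρ := by
    intro n
    induction n using Nat.twoStepInduction with
    | zero =>
      intro z hz
      rw [h0] at hz
      rw [h1]
      have := hM z (by linarith)
      linarith
    | one =>
      intro z hz
      rw [h1] at hz
      have hzN := hN z (by linarith)
      have e2 : fs 2 z = f.eval z * z + c := by rw [hrec 0 z, h1, h0]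
      rw [e2]
      have hup := aux_up (f.eval z) z c
      rw [← hCdef] at hup
      have habz : 0 ≤ ‖z‖ := norm_nonneg z
      have habf : 0 ≤ ‖f.eval z‖ := norm_nonneg _
      nlinarith
    | more n ihn _ =>
      intro z hz
      by_contra hc
      push_neg at hc
      have e1 : fs (n+3) z = fs (n+2) z * fs (n+1) z + c := hrec (n+1) z
      have e2 : fs (n+2) z = fs (n+1) z * fs n z + c := hrec n z
      have hc' : ρ ≤ ‖fs (n+3) z‖ := hc
      have hup := aux_up (fs (n+2) z) (fs (n+1) z) c
      rw [← e1, ← hCdef] at hup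
      have hlow := aux_low (fs (n+1) z) (fs n z) c
      rw [← e2, ← hCdef] at hlow
      have h0a : 0 ≤ ‖fs n z‖ := norm_nonneg _
      have h1a : 0 ≤ ‖fs (n+1) z‖ := norm_nonneg _
      have h2a : 0 ≤ ‖fs (n+2) z‖ := norm_nonneg _
      have ha1big : 2*(ρ - C) ≤ ‖fs (n+1) z‖ := by nlinarith
      have ha0small : ‖fs n z‖ ≤ 1/2 := by nlinarith
      have := ihn z ha0small
      linarith
  -- X: |fs m| ≤ 3 forces |fs (m+1)| < R, for m ≥ 1
  have hX : ∀ m, 1 ≤ m → ∀ z : ℂ, ‖fs m z‖ ≤ 3 →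
      ‖fs (m+1) z‖ < R := by
    intro m hm z hz
    match m, hm with
    | 1, _ =>
      have hzN := hN z (by rwa [h1] at hz)
      have e2 : fs 2 z = f.eval z * z + c := by rw [hrec 0 z, h1, h0]
      rw [e2]
      have hup := aux_up (f.eval z) z c
      rw [← hCdef] at hup
      rw [h1] at hz
      have habz : 0 ≤ ‖z‖ := norm_nonneg z
      have habf : 0 ≤ ‖f.eval z‖ := norm_nonneg _
      nlinarith
    | (k+2), _ =>
      by_contra hc
      push_neg at hc
      have e1 : fs (k+3) z = fs (k+2) z * fs (k+1) z + c := hrec (k+1) z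
      have e2 : fs (k+2) z = fs (k+1) z * fs k z + c := hrec k z
      have hc' : R ≤ ‖fs (k+3) z‖ := hc
      have hup := aux_up (fs (k+2) z) (fs (k+1) z) c
      rw [← e1, ← hCdef] at hup
      have hlow := aux_low (fs (k+1) z) (fs k z) c
      rw [← e2, ← hCdef] at hlow
      have h0a : 0 ≤ ‖fs k z‖ := norm_nonneg _
      have h1a : 0 ≤ ‖fs (k+1) z‖ := norm_nonneg _
      have h2a : 0 ≤ ‖fs (k+2) z‖ := norm_nonneg _
      have ha1big : ρ ≤ ‖fs (k+1) z‖ := by nlinarith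
      have ha0small : ‖fs k z‖ ≤ 1/2 := by nlinarith
      have := hV k z ha0small
      linarith
  -- growth
  have hG : ∀ m, 1 ≤ m → ∀ z : ℂ, R ≤ ‖fs m z‖ →
      2 * ‖fs m z‖ + 1 ≤ ‖fs (m+1) z‖ := by
    intro m hm z hz
    match m, hm with
    | 1, _ =>
      rw [h1] at hz
      have hz3 : 3 < ‖z‖ := by
        by_contra hle
        push_neg at hle
        have := hM z hle
        linarith
      have e2 : fs 2 z = f.eval z * z + c := by rw [hrec 0 z, h1, h0]
      have hlow := aux_low (f.eval z) z c
      rw [← e2, ← hCdef] at hlow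
      rw [h1]
      have habf : 0 ≤ ‖f.eval z‖ := norm_nonneg _
      nlinarith
    | (k+2), _ =>
      have h3 : 3 < ‖fs (k+1) z‖ := by
        by_contra hle
        push_neg at hle
        exact absurd (hX (k+1) (by omega) z hle) (not_lt.2 hz)
      have e1 : fs (k+3) z = fs (k+2) z * fs (k+1) z + c := hrec (k+1) z
      have hlow := aux_low (fs (k+2) z) (fs (k+1) z) c
      rw [← e1, ← hCdef] at hlow
      have h2a : 0 ≤ ‖fs (k+2) z‖ := norm_nonneg _
      nlinarith
  refine ⟨R, hRpos, ?_, ?_⟩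
  · intro n hn z hz
    simp only [Set.mem_preimage, mem_ball_zero_iff] at hz ⊢
    by_contra hc
    push_neg at hc
    have := hG n hn z hc
    linarith
  · ext z
    simp only [Set.mem_setOf_eq, Set.mem_iInter, Set.mem_preimage, mem_ball_zero_iff]
    constructor
    · intro hb n
      by_contra hc
      push_neg at hc
      have grow : ∀ k : ℕ, R + k ≤ ‖fs (n+1+k) z‖ := by
        intro k
        induction k with
        | zero => simpa using hc
        | succ k ih =>
          have hkc : (0:ℝ) ≤ (k:ℝ) := Nat.cast_nonneg k
          have hR' : R ≤ ‖fs (n+1+k) z‖ := by linarith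
          have hg := hG (n+1+k) (by omega) z hR'
          have e : n+1+(k+1) = (n+1+k)+1 := by omega
          rw [e]
          push_cast
          linarith
      obtain ⟨B, hB⟩ := hb
      obtain ⟨k, hk⟩ := exists_nat_gt (B - R)
      have h1' := grow k
      have h2' : ‖fs (n+1+k) z‖ ≤ B :=
        hB (Set.mem_range_self (n+1+k))
      linarith
    · intro h
      refine ⟨max (‖z‖) R, ?_⟩
      rintro x ⟨n, rfl⟩
      cases n with
      | zero =>
        simp only [h0]
        exact le_max_left _ _
      | succ n =>
        exact le_trans (h n).le (le_max_right _ _)
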